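/- Let ν be a class (ii) distribution with associated functions f, φ, Φ, let θ>1, and let F_Φ be the associated divergence-generating function. Then for any probability measure η on [0,∞) with density g, finiteness of D_{F_Φ}(η|ν) implies finiteness of the Kullback–Leibler divergence D^{KL}(η|ν). -/

import Mathlib

open Filter MeasureTheory Set
open scoped ENNReal Topology

noncomputable section

/-- The `F`-divergence `D_F(η|ν)` between a reference density `f` and an
alternative density `g` on `(0,∞)` (the value `⊤` encodes an infinite divergence). -/
def Ddiv (F f g : ℝ → ℝ) : ℝ≥0∞ :=
  ∫⁻ x in Set.Ioi (0 : ℝ), ENNReal.ofReal (F (g x / f x) * f x)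

/-- Generator of the polynomial (α-) divergence: `F(y) = (y^α - 1)/(α(α-1))`. -/
def Falpha (α : ℝ) : ℝ → ℝ := fun y => (y ^ α - 1) / (α * (α - 1))

/-- Class (i): the log-density grows at least linearly, `lim φ(x)/x > c > 0`. -/
def IsClassI (φ : ℝ → ℝ) : Prop :=
  ∃ c : ℝ, 0 < c ∧ ∀ᶠ x in atTop, c < φ x / x

/-- Data witnessing that a distribution with log-density `φ` (density `exp(-φ)`) is of
class (ii): heavier than exponential but lighter than any power law, together with the
auxiliary function `Φ` and the inverse `Ψ = Φ⁻¹` of its restriction to `[x̄, ∞)`. -/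
structure ClassIIData (φ : ℝ → ℝ) : Type where
  xbar : ℝ
  Φ : ℝ → ℝ
  Ψ : ℝ → ℝ
  xbar_pos : 0 < xbar
  tendsto_div_id : Tendsto (fun x => φ x / x) atTop (nhds 0)
  tendsto_div_log : Tendsto (fun x => φ x / Real.log x) atTop atTop
  pos : ∀ x ∈ Set.Ici xbar, 0 < Φ x
  strictConcave : StrictConcaveOn ℝ (Set.Ici xbar) Φ
  smooth : ContDiffOn ℝ 2 Φ (Set.Ici xbar)
  strictMono : StrictMonoOn Φ (Set.Ici xbar)
  inv_left : ∀ x ∈ Set.Ici xbar, Ψ (Φ x) = x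
  inv_right : ∀ y ∈ Set.Ici (Φ xbar), Φ (Ψ y) = y
  liminf_pos : ∃ c : ℝ, 0 < c ∧ ∀ᶠ x in atTop, c ≤ Ψ (φ x) / x
  limsup_lt_top : ∃ C : ℝ, ∀ᶠ x in atTop, Ψ (φ x) / x ≤ C

namespace ClassIIData

variable {φ : ℝ → ℝ}

/-- `ȳ = exp(Φ(x̄))`. -/
def ybar (d : ClassIIData φ) : ℝ := Real.exp (d.Φ d.xbar)

/-- The constant `a = (1+log ȳ)/(Φ⁻¹(log ȳ)^θ + θ Φ⁻¹(log ȳ)^{θ-1} (Φ⁻¹)'(log ȳ))`. -/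
def aconst (d : ClassIIData φ) (θ : ℝ) : ℝ :=
  (1 + Real.log d.ybar) /
    (d.Ψ (Real.log d.ybar) ^ θ +
      θ * d.Ψ (Real.log d.ybar) ^ (θ - 1) * deriv d.Ψ (Real.log d.ybar))

/-- The constant `b = ȳ log ȳ - a ȳ Φ⁻¹(log ȳ)^θ`. -/
def bconst (d : ClassIIData φ) (θ : ℝ) : ℝ :=
  d.ybar * Real.log d.ybar - d.aconst θ * d.ybar * d.Ψ (Real.log d.ybar) ^ θ

/-- The divergence generator `F_Φ`: `y log y` for `y ≤ ȳ` and
`a y Φ⁻¹(log y)^θ + b` for `y > ȳ`. -/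
def FPhi (d : ClassIIData φ) (θ : ℝ) : ℝ → ℝ := fun y =>
  if y ≤ d.ybar then y * Real.log y
  else d.aconst θ * y * d.Ψ (Real.log y) ^ θ + d.bconst θ

/-- `ψ(x) = a Φ⁻¹(x)^θ`. -/
def psiFun (d : ClassIIData φ) (θ : ℝ) : ℝ → ℝ := fun x => d.aconst θ * d.Ψ x ^ θ

/-- The integrand of `I(c) = ∫_c^∞ e^y (ψ(y)+ψ'(y))(ψ'(y)+ψ''(y)) f((F_Φ'(e^y)-α₁)/α₂) dy`. -/
def Iintegrand (d : ClassIIData φ) (θ α₁ α₂ : ℝ) (f : ℝ → ℝ) : ℝ → ℝ := fun y =>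
  Real.exp y * (d.psiFun θ y + deriv (d.psiFun θ) y) *
    (deriv (d.psiFun θ) y + deriv (deriv (d.psiFun θ)) y) *
    f ((deriv (d.FPhi θ) (Real.exp y) - α₁) / α₂)

end ClassIIData

/-- Convex conjugate over `s ≥ 0`: `F*(x) = sup_{s ≥ 0} (x s - F(s))`. -/
def Fstar (F : ℝ → ℝ) : ℝ → ℝ := fun x => sSup ((fun s => x * s - F s) '' Set.Ici (0 : ℝ))

/-- Pseudo-regular variation: `limsup_{c→1} limsup_{x→∞} h(cx)/h(x) = 1`,
spelled out in ε-form. -/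
def PseudoRegularlyVarying (h : ℝ → ℝ) : Prop :=
  (∀ ε > (0:ℝ), ∀ᶠ c in nhds (1:ℝ), ∀ᶠ x in atTop, h (c * x) / h x ≤ 1 + ε) ∧
  (∀ ε > (0:ℝ), ∃ᶠ c in nhds (1:ℝ), ∃ᶠ x in atTop, 1 - ε ≤ h (c * x) / h x)


section AuxLemmas

variable {φ : ℝ → ℝ}

lemma tendsto_phi_atTop (d : ClassIIData φ) : Tendsto φ atTop atTop := by
  have h := d.tendsto_div_log.atTop_mul_atTop₀ Real.tendsto_log_atTop
  have heq : (fun x => φ x / Real.log x * Real.log x) =ᶠ[atTop] φ := by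
    filter_upwards [eventually_gt_atTop (1:ℝ)] with x hx
    have hne : Real.log x ≠ 0 := ne_of_gt (Real.log_pos hx)
    field_simp
  exact Tendsto.congr' heq h

lemma phi_unbounded (d : ClassIIData φ) (M : ℝ) : ∃ x, d.xbar ≤ x ∧ M ≤ d.Φ x := by
  obtain ⟨c, hc, hev⟩ := d.liminf_pos
  have h1 : ∀ᶠ x in atTop, max M (d.Φ d.xbar) ≤ φ x :=
    (tendsto_phi_atTop d).eventually_ge_atTop _
  have h2 : ∀ᶠ x in atTop, d.xbar / c ≤ x := eventually_ge_atTop _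
  have h3 : ∀ᶠ x in atTop, (0:ℝ) < x := eventually_gt_atTop 0
  obtain ⟨x, hx1, hx2, hx3, hx4⟩ := (h1.and (h2.and (h3.and hev))).exists
  have hcx : c * x ≤ d.Ψ (φ x) := (le_div_iff₀ hx3).mp hx4
  have hxb : d.xbar ≤ c * x := by
    have h := (div_le_iff₀ hc).mp hx2
    nlinarith
  refine ⟨d.Ψ (φ x), le_trans hxb hcx, ?_⟩
  have hinv := d.inv_right (φ x) (le_trans (le_max_right _ _) hx1)
  rw [hinv]
  exact le_trans (le_max_left _ _) hx1

lemma psi_spec (d : ClassIIData φ) {t : ℝ} (ht : d.Φ d.xbar ≤ t) :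
    d.xbar ≤ d.Ψ t ∧ d.Φ (d.Ψ t) = t := by
  obtain ⟨X, hX1, hX2⟩ := phi_unbounded d t
  have hcont : ContinuousOn d.Φ (Icc d.xbar X) :=
    d.smooth.continuousOn.mono Icc_subset_Ici_self
  obtain ⟨x, hx, hxt⟩ := intermediate_value_Icc hX1 hcont ⟨ht, hX2⟩
  have hΨ : d.Ψ t = x := by rw [← hxt]; exact d.inv_left x hx.1
  exact ⟨by rw [hΨ]; exact hx.1, by rw [hΨ, hxt]⟩

lemma phi_linear_bound (d : ClassIIData φ) {x : ℝ} (hx : d.xbar + 1 ≤ x) :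
    d.Φ x ≤ d.Φ d.xbar + (d.Φ (d.xbar + 1) - d.Φ d.xbar) * (x - d.xbar) := by
  rcases eq_or_lt_of_le hx with h | h
  · rw [← h]; nlinarith [d.Φ (d.xbar + 1), d.Φ d.xbar]
  · have hxx : (0:ℝ) < x - d.xbar := by linarith
    set b : ℝ := 1 / (x - d.xbar) with hbdef
    have hb : 0 < b := by positivity
    have hb1 : b ≤ 1 := by rw [hbdef, div_le_one hxx]; linarith
    have key := d.strictConcave.concaveOn.2 (mem_Ici.mpr le_rfl)
      (mem_Ici.mpr (by linarith : d.xbar ≤ x)) (by linarith : (0:ℝ) ≤ 1 - b) hb.le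
      (by ring)
    have harg : (1 - b) • d.xbar + b • x = d.xbar + 1 := by
      simp only [smul_eq_mul, hbdef]; field_simp; ring
    rw [harg] at key
    simp only [smul_eq_mul] at key
    have hmul : ((1 - b) * d.Φ d.xbar + b * d.Φ x) * (x - d.xbar) ≤
        d.Φ (d.xbar + 1) * (x - d.xbar) := mul_le_mul_of_nonneg_right key hxx.le
    have e2 : ((1 - b) * d.Φ d.xbar + b * d.Φ x) * (x - d.xbar) =
        (x - d.xbar - 1) * d.Φ d.xbar + d.Φ x := by
      rw [hbdef]; field_simp
    rw [e2] at hmul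
    nlinarith [hmul]

lemma deriv_psi_nonneg (d : ClassIIData φ) : 0 ≤ deriv d.Ψ (d.Φ d.xbar) := by
  by_cases hdiff : DifferentiableAt ℝ d.Ψ (d.Φ d.xbar)
  · have hd := hdiff.hasDerivAt.hasDerivWithinAt (s := Ioi (d.Φ d.xbar))
    rw [hasDerivWithinAt_iff_tendsto_slope' (by simp : d.Φ d.xbar ∉ Ioi (d.Φ d.xbar))] at hd
    have hlt : d.Φ d.xbar < d.Φ (d.xbar + 1) :=
      d.strictMono (mem_Ici.mpr le_rfl) (mem_Ici.mpr (by linarith [d.xbar_pos])) (by linarith)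
    refine ge_of_tendsto hd ?_
    filter_upwards [Ioo_mem_nhdsGT_of_mem (⟨le_rfl, hlt⟩ : d.Φ d.xbar ∈ Ico (d.Φ d.xbar) (d.Φ (d.xbar + 1)))] with t ht
    have hΨt := psi_spec d ht.1.le
    have hΨb : d.Ψ (d.Φ d.xbar) = d.xbar := d.inv_left _ (mem_Ici.mpr le_rfl)
    rw [slope_def_field]
    apply div_nonneg
    · rw [hΨb]; linarith [hΨt.1]
    · linarith [ht.1]
  · rw [deriv_zero_of_not_differentiableAt hdiff]

lemma key_bound (d : ClassIIData φ) {θ : ℝ} (hθ : 1 < θ) :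
    ∃ M K : ℝ, 1 ≤ M ∧ 0 ≤ K ∧ ∀ y : ℝ, M < y → y * Real.log y ≤ K * d.FPhi θ y := by
  have hx0 := d.xbar_pos
  have hΦpos : 0 < d.Φ d.xbar := d.pos _ (mem_Ici.mpr le_rfl)
  have hΨb : d.Ψ (d.Φ d.xbar) = d.xbar := d.inv_left _ (mem_Ici.mpr le_rfl)
  have hlog : Real.log d.ybar = d.Φ d.xbar := Real.log_exp _
  have hθ0 : (0:ℝ) < θ := by linarith
  have ha : 0 < d.aconst θ := by
    unfold ClassIIData.aconst
    apply div_pos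
    · rw [hlog]; linarith
    · rw [hlog, hΨb]
      have h1 : 0 < d.xbar ^ θ := Real.rpow_pos_of_pos hx0 θ
      have h2 : 0 ≤ θ * d.xbar ^ (θ - 1) * deriv d.Ψ (d.Φ d.xbar) :=
        mul_nonneg (mul_nonneg hθ0.le (Real.rpow_pos_of_pos hx0 _).le) (deriv_psi_nonneg d)
      linarith
  set a := d.aconst θ with hadef
  set b := d.bconst θ with hbdef
  set s := d.Φ (d.xbar + 1) - d.Φ d.xbar with hsdef
  have hs : 0 < s := by
    have := d.strictMono (mem_Ici.mpr le_rfl)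
      (mem_Ici.mpr (by linarith : d.xbar ≤ d.xbar + 1)) (by linarith)
    rw [hsdef]; linarith
  refine ⟨max (max d.ybar (Real.exp (max (d.Φ (d.xbar + 1)) (2 * d.Φ d.xbar))))
      (max (Real.exp 1) (4 * s * |b| / a)), 4 * s / a, ?_, by positivity, ?_⟩
  · exact le_trans (Real.one_le_exp one_pos.le)
      (le_trans (le_max_left _ _) (le_max_right _ _))
  intro y hy
  have hyb : d.ybar < y :=
    lt_of_le_of_lt (le_trans (le_max_left _ _) (le_max_left _ _)) hy
  have hy1 : Real.exp 1 < y :=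
    lt_of_le_of_lt (le_trans (le_max_left _ _) (le_max_right _ _)) hy
  have hyT : Real.exp (max (d.Φ (d.xbar + 1)) (2 * d.Φ d.xbar)) < y :=
    lt_of_le_of_lt (le_trans (le_max_right _ _) (le_max_left _ _)) hy
  have hyB : 4 * s * |b| / a < y :=
    lt_of_le_of_lt (le_trans (le_max_right _ _) (le_max_right _ _)) hy
  have hy0 : (0:ℝ) < y := lt_trans (Real.exp_pos _) hy1
  have hly1 : 1 < Real.log y := by
    rw [← Real.log_exp 1]; exact Real.log_lt_log (Real.exp_pos _) hy1
  have hlyT : max (d.Φ (d.xbar + 1)) (2 * d.Φ d.xbar) < Real.log y := by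
    rw [← Real.log_exp (max (d.Φ (d.xbar + 1)) (2 * d.Φ d.xbar))]
    exact Real.log_lt_log (Real.exp_pos _) hyT
  have ht : d.Φ (d.xbar + 1) ≤ Real.log y := (lt_of_le_of_lt (le_max_left _ _) hlyT).le
  have ht0 : d.Φ d.xbar ≤ Real.log y := by rw [hsdef] at hs; linarith
  obtain ⟨hxb, hPhiPsi⟩ := psi_spec d ht0
  have hge : d.xbar + 1 ≤ d.Ψ (Real.log y) := by
    by_contra hltc
    push_neg at hltc
    have := d.strictMono (mem_Ici.mpr hxb)
      (mem_Ici.mpr (by linarith : d.xbar ≤ d.xbar + 1)) hltc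
    rw [hPhiPsi] at this; linarith
  have hΨ2 : (Real.log y - d.Φ d.xbar) / s ≤ d.Ψ (Real.log y) := by
    have hlin := phi_linear_bound d hge
    rw [hPhiPsi] at hlin
    rw [div_le_iff₀ hs]
    nlinarith [hlin, hsdef, mul_pos hs hx0]
  have h2Φ : 2 * d.Φ d.xbar ≤ Real.log y := (lt_of_le_of_lt (le_max_right _ _) hlyT).le
  have hΨhalf : Real.log y / (2 * s) ≤ d.Ψ (Real.log y) := by
    refine le_trans ?_ hΨ2
    rw [div_le_div_iff₀ (by positivity) hs]
    nlinarith
  have hΨge1 : (1:ℝ) ≤ d.Ψ (Real.log y) := by linarith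
  have hpow : d.Ψ (Real.log y) ≤ d.Ψ (Real.log y) ^ θ := by
    calc d.Ψ (Real.log y) = d.Ψ (Real.log y) ^ (1:ℝ) := (Real.rpow_one _).symm
      _ ≤ _ := Real.rpow_le_rpow_of_exponent_le hΨge1 hθ.le
  have hFPhi : d.FPhi θ y = a * y * d.Ψ (Real.log y) ^ θ + b := by
    rw [ClassIIData.FPhi, if_neg (not_le.mpr hyb)]
  have hchain : a * y * (Real.log y / (2 * s)) + b ≤ d.FPhi θ y := by
    rw [hFPhi]
    have h := mul_le_mul_of_nonneg_left (le_trans hΨhalf hpow)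
      (by positivity : (0:ℝ) ≤ a * y)
    linarith
  have hylog : 4 * s * |b| / a ≤ y * Real.log y := by
    calc 4 * s * |b| / a ≤ y := hyB.le
      _ = y * 1 := (mul_one y).symm
      _ ≤ y * Real.log y := by nlinarith
  have hbabs : |b| ≤ a / (4 * s) * (y * Real.log y) := by
    rw [div_mul_eq_mul_div, le_div_iff₀ (by positivity : (0:ℝ) < 4 * s)]
    calc |b| * (4 * s) = 4 * s * |b| / a * a := by field_simp
      _ ≤ y * Real.log y * a := mul_le_mul_of_nonneg_right hylog ha.le
      _ = a * (y * Real.log y) := by ring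
  have hgoal : a / (4 * s) * (y * Real.log y) ≤ d.FPhi θ y := by
    have hb' : -|b| ≤ b := neg_abs_le b
    have e1 : a * y * (Real.log y / (2 * s)) = 2 * (a / (4 * s) * (y * Real.log y)) := by
      field_simp; ring
    rw [e1] at hchain
    linarith
  calc y * Real.log y = 4 * s / a * (a / (4 * s) * (y * Real.log y)) := by
        field_simp
    _ ≤ 4 * s / a * d.FPhi θ y :=
        mul_le_mul_of_nonneg_left hgoal (by positivity)

lemma tlogt_le {t M : ℝ} (ht : 0 ≤ t) (htM : t ≤ M) (hM : 1 ≤ M) :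
    t * Real.log t ≤ M * Real.log M := by
  have hlM : 0 ≤ Real.log M := Real.log_nonneg hM
  rcases le_or_gt t 1 with h | h
  · have h1 : Real.log t ≤ 0 := Real.log_nonpos ht h
    nlinarith
  · have hlt : Real.log t ≤ Real.log M := Real.log_le_log (by linarith) htM
    nlinarith [Real.log_nonneg h.le]

end AuxLemmas

/-- Proposition 4.3, first half: finite `F_Φ`-divergence implies finite KL. -/
theorem stmt7
    (φ f : ℝ → ℝ)
    (hf : ∀ x ∈ Set.Ioi (0:ℝ), f x = Real.exp (-(φ x)))
    (hfc : ContinuousOn f (Set.Ioi 0))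
    (hfint : ∫ x in Set.Ioi (0:ℝ), f x = 1)
    (d : ClassIIData φ) (θ : ℝ) (hθ : 1 < θ)
    (g : ℝ → ℝ) (hgc : ContinuousOn g (Set.Ioi 0))
    (hg0 : ∀ x ∈ Set.Ioi (0:ℝ), 0 ≤ g x)
    (hgint : ∫ x in Set.Ioi (0:ℝ), g x = 1)
    (hfin : Ddiv (d.FPhi θ) f g < ⊤) :
    Ddiv (fun y => y * Real.log y) f g < ⊤ := by
  obtain ⟨M, K, hM1, hK0, hbound⟩ := key_bound d hθ
  have hIoi : MeasurableSet (Set.Ioi (0:ℝ)) := measurableSet_Ioi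
  set μ := volume.restrict (Set.Ioi (0:ℝ)) with hμ
  have hae_mem : ∀ᵐ x ∂μ, x ∈ Set.Ioi (0:ℝ) := ae_restrict_mem hIoi
  have hfpos : ∀ x ∈ Set.Ioi (0:ℝ), 0 < f x := fun x hx => by
    rw [hf x hx]; exact Real.exp_pos _
  have hr : AEMeasurable (fun x => g x / f x) μ :=
    (hgc.aemeasurable hIoi).div (hfc.aemeasurable hIoi)
  obtain ⟨r', hr'm, hr'eq⟩ := hr
  set A := {x | r' x ≤ M} with hA
  have hAm : MeasurableSet A := measurableSet_le hr'm measurable_const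
  set G := fun x => ENNReal.ofReal (g x / f x * Real.log (g x / f x) * f x) with hG
  have hfi : IntegrableOn f (Set.Ioi 0) := by
    by_contra h
    rw [MeasureTheory.integral_undef h] at hfint
    norm_num at hfint
  have hfl : ∫⁻ x, ENNReal.ofReal (f x) ∂μ = 1 := by
    rw [← ofReal_integral_eq_lintegral_ofReal hfi ?_]
    · rw [hfint]; simp
    · filter_upwards [hae_mem] with x hx; exact (hfpos x hx).le
  set C := M * Real.log M with hC
  have hC0 : 0 ≤ C := mul_nonneg (by linarith) (Real.log_nonneg hM1)
  have hb1 : ∫⁻ x in A, G x ∂μ ≤ ENNReal.ofReal C := by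
    have hstep : ∫⁻ x in A, G x ∂μ ≤
        ∫⁻ x in A, ENNReal.ofReal C * ENNReal.ofReal (f x) ∂μ := by
      apply lintegral_mono_ae
      filter_upwards [ae_restrict_of_ae hae_mem, ae_restrict_of_ae hr'eq,
        ae_restrict_mem hAm] with x hx hrx hxA
      rw [← ENNReal.ofReal_mul hC0]
      apply ENNReal.ofReal_le_ofReal
      have hfx := hfpos x hx
      have hr0 : 0 ≤ g x / f x := div_nonneg (hg0 x hx) hfx.le
      have hrM : g x / f x ≤ M := by rw [hrx]; exact hxA
      exact mul_le_mul_of_nonneg_right (tlogt_le hr0 hrM hM1) hfx.le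
    calc ∫⁻ x in A, G x ∂μ ≤ _ := hstep
      _ ≤ ∫⁻ x, ENNReal.ofReal C * ENNReal.ofReal (f x) ∂μ :=
          setLIntegral_le_lintegral _ _
      _ = ENNReal.ofReal C * ∫⁻ x, ENNReal.ofReal (f x) ∂μ :=
          lintegral_const_mul' _ _ ENNReal.ofReal_ne_top
      _ = ENNReal.ofReal C := by rw [hfl, mul_one]
  have hb2 : ∫⁻ x in Aᶜ, G x ∂μ ≤ ENNReal.ofReal K * Ddiv (d.FPhi θ) f g := by
    have hstep : ∫⁻ x in Aᶜ, G x ∂μ ≤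
        ∫⁻ x in Aᶜ, ENNReal.ofReal K *
          ENNReal.ofReal (d.FPhi θ (g x / f x) * f x) ∂μ := by
      apply lintegral_mono_ae
      filter_upwards [ae_restrict_of_ae hae_mem, ae_restrict_of_ae hr'eq,
        ae_restrict_mem hAm.compl] with x hx hrx hxA
      rw [← ENNReal.ofReal_mul hK0]
      apply ENNReal.ofReal_le_ofReal
      have hfx := hfpos x hx
      have hrM : M < g x / f x := by rw [hrx]; exact not_le.mp hxA
      calc g x / f x * Real.log (g x / f x) * f x
          ≤ K * d.FPhi θ (g x / f x) * f x :=
            mul_le_mul_of_nonneg_right (hbound _ hrM) hfx.le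
        _ = K * (d.FPhi θ (g x / f x) * f x) := by ring
    calc ∫⁻ x in Aᶜ, G x ∂μ ≤ _ := hstep
      _ ≤ ∫⁻ x, ENNReal.ofReal K *
            ENNReal.ofReal (d.FPhi θ (g x / f x) * f x) ∂μ :=
          setLIntegral_le_lintegral _ _
      _ = ENNReal.ofReal K * Ddiv (d.FPhi θ) f g :=
          lintegral_const_mul' _ _ ENNReal.ofReal_ne_top
  have hEq : Ddiv (fun y => y * Real.log y) f g = ∫⁻ x, G x ∂μ := rfl
  rw [hEq, ← lintegral_add_compl G hAm]
  exact lt_of_le_of_lt (add_le_add hb1 hb2)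
    (ENNReal.add_lt_top.mpr ⟨ENNReal.ofReal_lt_top,
      ENNReal.mul_lt_top ENNReal.ofReal_lt_top hfin⟩)
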